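/- Bourgain's L⁴ Strichartz estimate on the one-dimensional torus: there exists a constant C such that for every finitely supported sequence (a_k)_{k∈ℤ} of complex numbers, ‖Σ_{k∈ℤ} a_k e^{2πi(kx + k²t)}‖_{L⁴(𝕋²)} ≤ C (Σ_k |a_k|²)^{1/2}. -/

import Mathlib

open MeasureTheory Real

noncomputable section

def T2 : Set (ℝ × ℝ) := Set.Icc (0 : ℝ) 1 ×ˢ Set.Icc (0 : ℝ) 1

def ee (k : ℤ) (p : ℝ × ℝ) : ℂ :=
  Complex.exp (2 * π * Complex.I * ((k : ℝ) * p.2 + (k : ℝ) ^ 2 * p.1))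

def gg (N M : ℤ) (p : ℝ × ℝ) : ℂ :=
  Complex.exp (2 * π * Complex.I * M * p.1) * Complex.exp (2 * π * Complex.I * N * p.2)

def coefF (a : ℤ → ℂ) (q : ℤ × ℤ × ℤ × ℤ) : ℂ :=
  a q.2.2.2 * a q.2.2.1 * (starRingEnd ℂ) (a q.2.1) * (starRingEnd ℂ) (a q.1)

def FF (a : ℤ → ℂ) (q : ℤ × ℤ × ℤ × ℤ) (p : ℝ × ℝ) : ℂ :=
  coefF a q * gg (q.2.2.2 + q.2.2.1 - q.2.1 - q.1)
    (q.2.2.2 ^ 2 + q.2.2.1 ^ 2 - q.2.1 ^ 2 - q.1 ^ 2) p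

lemma ee_continuous (k : ℤ) : Continuous (ee k) := by
  unfold ee; fun_prop

lemma gg_continuous (N M : ℤ) : Continuous (gg N M) := by
  unfold gg; fun_prop

lemma exp_int_integral (n : ℤ) :
    ∫ x in Set.Icc (0:ℝ) 1, Complex.exp (2 * π * Complex.I * n * x)
      = if n = 0 then 1 else 0 := by
  rw [integral_Icc_eq_integral_Ioc, ← intervalIntegral.integral_of_le (by norm_num : (0:ℝ) ≤ 1)]
  by_cases hn : n = 0
  · simp [hn]
  · have hc : (2 * π * Complex.I * n : ℂ) ≠ 0 := by
      simp [Complex.ext_iff, pi_ne_zero, Complex.I_ne_zero, hn]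
    rw [if_neg hn]
    have := integral_exp_mul_complex (a := 0) (b := 1) hc
    simp only [Complex.ofReal_zero, Complex.ofReal_one, mul_one, mul_zero, Complex.exp_zero] at this
    rw [show (fun x : ℝ => Complex.exp (2 * π * Complex.I * n * x)) = fun x : ℝ => Complex.exp (2 * π * Complex.I * n * (x:ℂ)) from rfl]
    rw [this]
    have h1 : Complex.exp (2 * π * Complex.I * n) = 1 := by
      rw [show (2 * π * Complex.I * n : ℂ) = n * (2 * π * Complex.I) by ring]
      exact Complex.exp_int_mul_two_pi_mul_I n
    rw [h1]; simp

lemma gg_integral (N M : ℤ) :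
    ∫ p in T2, gg N M p = (if M = 0 then 1 else 0) * (if N = 0 then 1 else 0) := by
  unfold gg
  rw [T2, Measure.volume_eq_prod]
  rw [setIntegral_prod_mul (fun x : ℝ => Complex.exp (2 * π * Complex.I * M * x))
    (fun y : ℝ => Complex.exp (2 * π * Complex.I * N * y)) (Set.Icc 0 1) (Set.Icc 0 1),
    exp_int_integral, exp_int_integral]

lemma term_eq (k1 k2 k3 k4 : ℤ) (p : ℝ × ℝ) :
    ee k1 p * ee k2 p * (starRingEnd ℂ) (ee k3 p) * (starRingEnd ℂ) (ee k4 p)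
      = gg (k1 + k2 - k3 - k4) (k1 ^ 2 + k2 ^ 2 - k3 ^ 2 - k4 ^ 2) p := by
  unfold ee gg
  rw [← Complex.exp_conj, ← Complex.exp_conj, ← Complex.exp_add, ← Complex.exp_add,
    ← Complex.exp_add, ← Complex.exp_add]
  congr 1
  simp only [map_mul, map_add, Complex.conj_I, Complex.conj_ofReal, map_pow, map_ofNat]
  push_cast
  ring

lemma quad_resolve {k1 k2 k3 k4 : ℤ} (h1 : k1 + k2 - k3 - k4 = 0)
    (h2 : k1 ^ 2 + k2 ^ 2 - k3 ^ 2 - k4 ^ 2 = 0) :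
    (k3 = k1 ∧ k4 = k2) ∨ (k3 = k2 ∧ k4 = k1) := by
  have hk4 : k4 = k1 + k2 - k3 := by omega
  subst hk4
  have h2' : 2 * ((k3 - k1) * (k3 - k2)) = 0 := by linear_combination -h2
  have h3 : (k3 - k1) * (k3 - k2) = 0 := by linarith
  rcases mul_eq_zero.1 h3 with h | h
  · left; constructor <;> omega
  · right; constructor <;> omega

lemma expand_eq (a : ℤ → ℂ) (s : Finset ℤ) (p : ℝ × ℝ) :
    (∑ q ∈ s ×ˢ s ×ˢ s ×ˢ s, FF a q p)
      = (∑ k ∈ s, a k * ee k p) * (∑ k ∈ s, a k * ee k p) *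
        (starRingEnd ℂ) (∑ k ∈ s, a k * ee k p) *
        (starRingEnd ℂ) (∑ k ∈ s, a k * ee k p) := by
  simp only [Finset.sum_product, map_sum, Finset.sum_mul, Finset.mul_sum, FF, coefF]
  refine Finset.sum_congr rfl fun k4 _ => Finset.sum_congr rfl fun k3 _ =>
    Finset.sum_congr rfl fun k2 _ => Finset.sum_congr rfl fun k1 _ => ?_
  rw [map_mul, map_mul, ← term_eq k1 k2 k3 k4 p]
  ring

lemma T2_compact : IsCompact T2 := isCompact_Icc.prod isCompact_Icc

lemma normSq_eq (z : ℂ) : Complex.normSq z = ‖z‖ ^ 2 := by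
  rw [Complex.normSq_eq_norm_sq]

lemma sum4_ind (s : Finset ℤ) (c : ℤ → ℤ → ℝ) :
    (∑ k4 ∈ s, ∑ k3 ∈ s, ∑ k2 ∈ s, ∑ k1 ∈ s,
        if k3 = k1 ∧ k4 = k2 then c k1 k2 else 0)
      = ∑ k4 ∈ s, ∑ k3 ∈ s, c k3 k4 := by
  refine Finset.sum_congr rfl fun k4 h4 => Finset.sum_congr rfl fun k3 h3 => ?_
  calc ∑ k2 ∈ s, ∑ k1 ∈ s, (if k3 = k1 ∧ k4 = k2 then c k1 k2 else 0)
      = ∑ k2 ∈ s, (if k4 = k2 then c k3 k2 else 0) := by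
        refine Finset.sum_congr rfl fun k2 _ => ?_
        simp only [ite_and]
        rw [Finset.sum_ite_eq, if_pos h3]
    _ = c k3 k4 := by rw [Finset.sum_ite_eq, if_pos h4]

lemma sum4_ind' (s : Finset ℤ) (c : ℤ → ℤ → ℝ) :
    (∑ k4 ∈ s, ∑ k3 ∈ s, ∑ k2 ∈ s, ∑ k1 ∈ s,
        if k3 = k2 ∧ k4 = k1 then c k1 k2 else 0)
      = ∑ k4 ∈ s, ∑ k3 ∈ s, c k4 k3 := by
  refine Finset.sum_congr rfl fun k4 h4 => Finset.sum_congr rfl fun k3 h3 => ?_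
  calc ∑ k2 ∈ s, ∑ k1 ∈ s, (if k3 = k2 ∧ k4 = k1 then c k1 k2 else 0)
      = ∑ k2 ∈ s, (if k3 = k2 then c k4 k2 else 0) := by
        refine Finset.sum_congr rfl fun k2 _ => ?_
        by_cases h : k3 = k2
        · rw [if_pos h]
          simp only [h, true_and]
          rw [Finset.sum_ite_eq, if_pos h4]
        · simp [h]
    _ = c k4 k3 := by rw [Finset.sum_ite_eq, if_pos h3]

lemma iteZ_nonneg {c : Prop} [Decidable c] {x : ℝ} (hx : 0 ≤ x) :
    0 ≤ if c then x else 0 := by split_ifs; exacts [hx, le_rfl]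

lemma key (a : ℤ → ℂ) (s : Finset ℤ) :
    ∫ p in T2, ‖∑ k ∈ s, a k * ee k p‖ ^ 4 ≤ 2 * (∑ k ∈ s, ‖a k‖ ^ 2) ^ 2 := by
  classical
  set Q : Finset (ℤ × ℤ × ℤ × ℤ) := s ×ˢ s ×ˢ s ×ˢ s with hQ
  have hpt : ∀ p : ℝ × ℝ, (‖∑ k ∈ s, a k * ee k p‖ : ℝ) ^ 4 = (∑ q ∈ Q, FF a q p).re := by
    intro p
    rw [hQ, expand_eq a s p]
    set z := ∑ k ∈ s, a k * ee k p with hz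
    have h2 : z * z * (starRingEnd ℂ) z * (starRingEnd ℂ) z
        = ((‖z‖ ^ 2 * ‖z‖ ^ 2 : ℝ) : ℂ) := by
      rw [show z * z * (starRingEnd ℂ) z * (starRingEnd ℂ) z
          = (z * (starRingEnd ℂ) z) * (z * (starRingEnd ℂ) z) by ring,
        Complex.mul_conj, ← normSq_eq]
      push_cast
      ring
    rw [h2, Complex.ofReal_re]
    ring
  have hFint : ∀ q ∈ Q, IntegrableOn (FF a q) T2 := fun q _ =>
    ((continuous_const.mul (gg_continuous _ _)).continuousOn).integrableOn_compact T2_compact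
  have hIeq : ∫ p in T2, ‖∑ k ∈ s, a k * ee k p‖ ^ 4
      = ∑ q ∈ Q, (coefF a q *
          ((if q.2.2.2 ^ 2 + q.2.2.1 ^ 2 - q.2.1 ^ 2 - q.1 ^ 2 = 0 then 1 else 0) *
           (if q.2.2.2 + q.2.2.1 - q.2.1 - q.1 = 0 then 1 else 0))).re := by
    calc ∫ p in T2, ‖∑ k ∈ s, a k * ee k p‖ ^ 4
        = ∫ p in T2, (∑ q ∈ Q, FF a q p).re := by simp only [hpt]
      _ = RCLike.re (∫ p in T2, ∑ q ∈ Q, FF a q p) :=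
          integral_re (integrable_finset_sum Q hFint)
      _ = (∑ q ∈ Q, ∫ p in T2, FF a q p).re := by
          rw [integral_finset_sum Q hFint]; rfl
      _ = _ := by
          rw [Complex.re_sum]
          refine Finset.sum_congr rfl fun q _ => ?_
          congr 1
          simp only [FF]
          rw [integral_const_mul, gg_integral]
  rw [hIeq]
  have hb : ∀ q ∈ Q, (coefF a q *
        ((if q.2.2.2 ^ 2 + q.2.2.1 ^ 2 - q.2.1 ^ 2 - q.1 ^ 2 = 0 then 1 else 0) *
         (if q.2.2.2 + q.2.2.1 - q.2.1 - q.1 = 0 then 1 else 0))).re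
      ≤ (if q.2.1 = q.2.2.2 ∧ q.1 = q.2.2.1 then ‖a q.2.2.2‖ ^ 2 * ‖a q.2.2.1‖ ^ 2 else 0)
        + (if q.2.1 = q.2.2.1 ∧ q.1 = q.2.2.2 then ‖a q.2.2.2‖ ^ 2 * ‖a q.2.2.1‖ ^ 2 else 0) := by
    intro q _
    obtain ⟨k4, k3, k2, k1⟩ := q
    dsimp only [coefF]
    by_cases hM : k1 ^ 2 + k2 ^ 2 - k3 ^ 2 - k4 ^ 2 = 0
    · by_cases hN : k1 + k2 - k3 - k4 = 0
      · rw [if_pos hM, if_pos hN, mul_one, mul_one]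
        have hre : ∀ b c : ℂ, (b * c * (starRingEnd ℂ) c * (starRingEnd ℂ) b).re
            = ‖b‖ ^ 2 * ‖c‖ ^ 2 := by
          intro b c
          rw [show b * c * (starRingEnd ℂ) c * (starRingEnd ℂ) b
              = (b * (starRingEnd ℂ) b) * (c * (starRingEnd ℂ) c) by ring,
            Complex.mul_conj, Complex.mul_conj, ← Complex.ofReal_mul, Complex.ofReal_re,
            normSq_eq, normSq_eq]
        rcases quad_resolve hN hM with ⟨h3, h4⟩ | ⟨h3, h4⟩
        · rw [h3, h4, if_pos ⟨rfl, rfl⟩]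
          have : (a k1 * a k2 * (starRingEnd ℂ) (a k1) * (starRingEnd ℂ) (a k2)).re
              = ‖a k1‖ ^ 2 * ‖a k2‖ ^ 2 := by
            rw [show a k1 * a k2 * (starRingEnd ℂ) (a k1) * (starRingEnd ℂ) (a k2)
                = a k1 * a k2 * (starRingEnd ℂ) (a k2) * (starRingEnd ℂ) (a k1) by ring]
            exact hre _ _
          rw [this]
          exact le_add_of_nonneg_right (iteZ_nonneg (by positivity))
        · rw [h3, h4, hre (a k1) (a k2),
            show (if k2 = k2 ∧ k1 = k1 then ‖a k1‖ ^ 2 * ‖a k2‖ ^ 2 else 0)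
              = ‖a k1‖ ^ 2 * ‖a k2‖ ^ 2 from if_pos ⟨rfl, rfl⟩]
          exact le_add_of_nonneg_left (iteZ_nonneg (by positivity))
      · rw [if_neg hN, mul_zero, mul_zero, Complex.zero_re]
        exact add_nonneg (iteZ_nonneg (by positivity)) (iteZ_nonneg (by positivity))
    · rw [if_neg hM, zero_mul, mul_zero, Complex.zero_re]
      exact add_nonneg (iteZ_nonneg (by positivity)) (iteZ_nonneg (by positivity))
  calc ∑ q ∈ Q, (coefF a q *
        ((if q.2.2.2 ^ 2 + q.2.2.1 ^ 2 - q.2.1 ^ 2 - q.1 ^ 2 = 0 then 1 else 0) *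
         (if q.2.2.2 + q.2.2.1 - q.2.1 - q.1 = 0 then 1 else 0))).re
      ≤ ∑ q ∈ Q,
          ((if q.2.1 = q.2.2.2 ∧ q.1 = q.2.2.1 then ‖a q.2.2.2‖ ^ 2 * ‖a q.2.2.1‖ ^ 2 else 0)
          + (if q.2.1 = q.2.2.1 ∧ q.1 = q.2.2.2 then ‖a q.2.2.2‖ ^ 2 * ‖a q.2.2.1‖ ^ 2 else 0)) :=
        Finset.sum_le_sum hb
    _ = 2 * (∑ k ∈ s, ‖a k‖ ^ 2) ^ 2 := by
        rw [Finset.sum_add_distrib, hQ]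
        simp only [Finset.sum_product]
        rw [sum4_ind s (fun k1 k2 => ‖a k1‖ ^ 2 * ‖a k2‖ ^ 2),
          sum4_ind' s (fun k1 k2 => ‖a k1‖ ^ 2 * ‖a k2‖ ^ 2)]
        have h1 : (∑ k4 ∈ s, ∑ k3 ∈ s, ‖a k3‖ ^ 2 * ‖a k4‖ ^ 2)
            = (∑ k ∈ s, ‖a k‖ ^ 2) ^ 2 := by
          rw [sq, Finset.sum_mul_sum]
          exact Finset.sum_congr rfl fun i _ => Finset.sum_congr rfl fun j _ => mul_comm _ _
        have h2 : (∑ k4 ∈ s, ∑ k3 ∈ s, ‖a k4‖ ^ 2 * ‖a k3‖ ^ 2)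
            = (∑ k ∈ s, ‖a k‖ ^ 2) ^ 2 := by
          rw [sq, Finset.sum_mul_sum]
        rw [h1, h2]; ring


/-- **Bourgain's `L⁴` Strichartz estimate on the one-dimensional torus.** There is a
constant `C` such that for every finitely supported sequence `(a_k)_{k∈ℤ}`,
`‖Σ_k a_k e^{2πi(kx + k²t)}‖_{L⁴(𝕋²)} ≤ C (Σ_k |a_k|²)^{1/2}`. -/
theorem bourgain_L4_strichartz_torus :
    ∃ C : ℝ, 0 < C ∧
      ∀ a : ℤ → ℂ, (Function.support a).Finite →
        (∫ p in Set.Icc (0 : ℝ) 1 ×ˢ Set.Icc (0 : ℝ) 1,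
            ‖∑' k : ℤ, a k *
                Complex.exp (2 * π * Complex.I * ((k : ℝ) * p.2 + (k : ℝ) ^ 2 * p.1))‖ ^ 4)
              ^ (1 / 4 : ℝ)
          ≤ C * Real.sqrt (∑' k : ℤ, ‖a k‖ ^ 2) := by
  classical
  refine ⟨(2 : ℝ) ^ ((1 : ℝ) / 4), by positivity, ?_⟩
  intro a hfin
  set s : Finset ℤ := hfin.toFinset with hs
  have hmem : ∀ k, k ∉ s → a k = 0 := fun k hk =>
    Function.notMem_support.mp (fun h => hk (hfin.mem_toFinset.mpr h))
  have htsum1 : ∀ p : ℝ × ℝ,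
      (∑' k : ℤ, a k *
          Complex.exp (2 * π * Complex.I * ((k : ℝ) * p.2 + (k : ℝ) ^ 2 * p.1)))
        = ∑ k ∈ s, a k * ee k p := by
    intro p
    unfold ee
    exact tsum_eq_sum (fun k hk => by rw [hmem k hk, zero_mul])
  have htsum2 : (∑' k : ℤ, ‖a k‖ ^ 2) = ∑ k ∈ s, ‖a k‖ ^ 2 :=
    tsum_eq_sum (fun k hk => by rw [hmem k hk]; simp)
  set S : ℝ := ∑ k ∈ s, ‖a k‖ ^ 2 with hS
  have hS0 : 0 ≤ S := Finset.sum_nonneg fun k _ => by positivity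
  have h1 : (∫ p in Set.Icc (0 : ℝ) 1 ×ˢ Set.Icc (0 : ℝ) 1,
      ‖∑' k : ℤ, a k *
          Complex.exp (2 * π * Complex.I * ((k : ℝ) * p.2 + (k : ℝ) ^ 2 * p.1))‖ ^ 4)
      = ∫ p in T2, ‖∑ k ∈ s, a k * ee k p‖ ^ 4 := by
    rw [show Set.Icc (0 : ℝ) 1 ×ˢ Set.Icc (0 : ℝ) 1 = T2 from rfl]
    have hfe : (fun p : ℝ × ℝ => ‖∑' k : ℤ, a k *
          Complex.exp (2 * π * Complex.I * ((k : ℝ) * p.2 + (k : ℝ) ^ 2 * p.1))‖ ^ 4)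
        = fun p => ‖∑ k ∈ s, a k * ee k p‖ ^ 4 := funext fun p => by rw [htsum1 p]
    rw [hfe]
  have hI0 : 0 ≤ ∫ p in T2, ‖∑ k ∈ s, a k * ee k p‖ ^ 4 :=
    setIntegral_nonneg (by unfold T2; exact measurableSet_Icc.prod measurableSet_Icc)
      (fun p _ => by positivity)
  rw [htsum2, h1]
  calc (∫ p in T2, ‖∑ k ∈ s, a k * ee k p‖ ^ 4) ^ (1 / 4 : ℝ)
      ≤ (2 * S ^ 2) ^ (1 / 4 : ℝ) :=
        Real.rpow_le_rpow hI0 (key a s) (by norm_num)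
    _ = (2 : ℝ) ^ ((1 : ℝ) / 4) * Real.sqrt S := by
        rw [Real.mul_rpow (by norm_num) (sq_nonneg _)]
        congr 1
        rw [← Real.rpow_natCast S 2, ← Real.rpow_mul hS0, Real.sqrt_eq_rpow]
        norm_num
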